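/- arXiv:2004.14305 — 3 statements merged into one kernel-verified Lean document; each statement's English description precedes it below -/
import Mathlib

section
/- Let α ∈ (0,1) ∪ (1,2) and λ > 0. Then for all t > 0, the derivative of t ↦ E_{α,1}(−λ t^α) equals −λ t^{α−1} E_{α,α}(−λ t^α). -/
/-- The Mittag-Leffler function `E_{a,b}(x) = ∑ xᵏ / Γ(a k + b)` (real version). -/
noncomputable def ML (a b x : ℝ) : ℝ := ∑' k : ℕ, x ^ k / Real.Gamma (a * k + b)

/-- Lower bound on Gamma in terms of powers: for `x ≥ 3` and `c ≥ 1`,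
`c ^ (x - 2) ≤ exp c * Γ x`. -/
lemma gamma_lower (x c : ℝ) (hx : 3 ≤ x) (hc : 1 ≤ c) :
    c ^ (x - 2) ≤ Real.exp c * Real.Gamma x := by
  set m : ℕ := ⌊x - 1⌋₊ with hm
  have hx1 : (2 : ℝ) ≤ x - 1 := by linarith
  have hmx : (m : ℝ) ≤ x - 1 := Nat.floor_le (by linarith)
  have hxm : x - 2 ≤ (m : ℝ) := by
    have := Nat.lt_floor_add_one (x - 1)
    linarith
  have hc0 : (0 : ℝ) < c := lt_of_lt_of_le one_pos hc
  have h1 : c ^ (x - 2) ≤ c ^ (m : ℝ) :=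
    Real.rpow_le_rpow_of_exponent_le hc hxm
  have h2 : c ^ (m : ℝ) = c ^ m := Real.rpow_natCast c m
  have h3 : (c : ℝ) ^ m ≤ Real.exp c * m.factorial := by
    have := Real.pow_div_factorial_le_exp (x := c) hc0.le m
    have hf : (0 : ℝ) < m.factorial := by positivity
    rw [div_le_iff₀ hf] at this
    linarith [this]
  have h4 : (m.factorial : ℝ) ≤ Real.Gamma x := by
    rw [← Real.Gamma_nat_eq_factorial]
    have hmono := Real.Gamma_strictMonoOn_Ici.monotoneOn
    apply hmono
    · have : (2 : ℝ) ≤ (m : ℝ) := by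
        exact_mod_cast Nat.le_floor (by exact_mod_cast hx1)
      simp only [Set.mem_Ici]; linarith
    · simp only [Set.mem_Ici]; linarith
    · linarith
  calc c ^ (x - 2) ≤ c ^ m := by rw [← h2]; exact h1
    _ ≤ Real.exp c * m.factorial := h3
    _ ≤ Real.exp c * Real.Gamma x := by
        have := Real.exp_pos c
        nlinarith

/-- Master summability lemma: `∑ (n+1) Cⁿ / Γ(a n + b)` converges for `a, b > 0`, `C ≥ 0`. -/
lemma summable_aux (a b C : ℝ) (ha : 0 < a) (hb : 0 < b) (hC : 0 ≤ C) :
    Summable (fun n : ℕ => ((n : ℝ) + 1) * C ^ n / Real.Gamma (a * n + b)) := by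
  set c : ℝ := max 1 ((2 * C + 1) ^ (1 / a)) with hcdef
  have hc1 : (1 : ℝ) ≤ c := le_max_left _ _
  have hc0 : (0 : ℝ) < c := lt_of_lt_of_le one_pos hc1
  have hca : 2 * C + 1 ≤ c ^ a := by
    have h1 : (2 * C + 1) ^ (1 / a) ≤ c := le_max_right _ _
    calc 2 * C + 1 = ((2 * C + 1) ^ (1 / a)) ^ a := by
          rw [← Real.rpow_mul (by positivity), one_div, inv_mul_cancel₀ ha.ne', Real.rpow_one]
      _ ≤ c ^ a := Real.rpow_le_rpow (by positivity) h1 ha.le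
  have hcapos : (0 : ℝ) < c ^ a := Real.rpow_pos_of_pos hc0 a
  have hhalf : C / c ^ a ≤ 1 / 2 := by
    rw [div_le_div_iff₀ hcapos two_pos]
    nlinarith
  have hhalf0 : 0 ≤ C / c ^ a := by positivity
  -- threshold
  set N : ℕ := ⌈(3 - b) / a⌉₊ with hN
  have hNa : ∀ n : ℕ, N ≤ n → 3 ≤ a * n + b := by
    intro n hn
    have h1 : (3 - b) / a ≤ (N : ℝ) := Nat.le_ceil _
    have h2 : (N : ℝ) ≤ n := by exact_mod_cast hn
    have := (div_le_iff₀ ha).mp (h1.trans h2)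
    linarith [this]
  -- comparison function
  have key : ∀ n : ℕ, N ≤ n →
      ((n : ℝ) + 1) * C ^ n / Real.Gamma (a * n + b)
        ≤ Real.exp c * c ^ (2 - b) * (((n : ℝ) + 1) * (1 / 2) ^ n) := by
    intro n hn
    have hx3 : (3 : ℝ) ≤ a * n + b := hNa n hn
    have hG : c ^ (a * n + b - 2) ≤ Real.exp c * Real.Gamma (a * n + b) :=
      gamma_lower _ _ hx3 hc1
    have hGpos : 0 < Real.Gamma (a * n + b) := Real.Gamma_pos_of_pos (by linarith)
    have hsplit : c ^ (a * n + b - 2) = (c ^ a) ^ n * c ^ (b - 2) := by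
      rw [← Real.rpow_natCast (c ^ a) n, ← Real.rpow_mul hc0.le, ← Real.rpow_add hc0]
      ring_nf
    have hpow : C ^ n / (c ^ a) ^ n = (C / c ^ a) ^ n := (div_pow C (c ^ a) n).symm
    have hb2 : (0 : ℝ) < c ^ (b - 2) := Real.rpow_pos_of_pos hc0 _
    have h2b : c ^ (2 - b) = (c ^ (b - 2))⁻¹ := by
      rw [← Real.rpow_neg hc0.le]; ring_nf
    -- from hG : (c^a)^n * c^(b-2) ≤ exp c * Γ
    rw [hsplit] at hG
    rw [div_le_iff₀ hGpos]
    have hexp : (0 : ℝ) < Real.exp c := Real.exp_pos c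
    have hn1 : (0 : ℝ) ≤ (n : ℝ) + 1 := by positivity
    have hCn : (0 : ℝ) ≤ C ^ n := by positivity
    have hfrac : ((n : ℝ) + 1) * C ^ n ≤ ((n : ℝ) + 1) * (1 / 2) ^ n * (c ^ a) ^ n := by
      have h1 : C ^ n ≤ (1 / 2) ^ n * (c ^ a) ^ n := by
        rw [← mul_pow]
        apply pow_le_pow_left₀ hC
        rw [div_le_iff₀ hcapos] at hhalf
        linarith
      nlinarith
    calc ((n : ℝ) + 1) * C ^ n
        ≤ ((n : ℝ) + 1) * (1 / 2) ^ n * (c ^ a) ^ n := hfrac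
      _ = (((n : ℝ) + 1) * (1 / 2) ^ n) * ((c ^ a) ^ n * c ^ (b - 2)) * (c ^ (2 - b)) := by
          rw [h2b]; field_simp
      _ ≤ (((n : ℝ) + 1) * (1 / 2) ^ n) * (Real.exp c * Real.Gamma (a * n + b)) * (c ^ (2 - b)) := by
          apply mul_le_mul_of_nonneg_right _ (le_of_lt (by rw [h2b]; positivity))
          apply mul_le_mul_of_nonneg_left hG (by positivity)
      _ = Real.exp c * c ^ (2 - b) * (((n : ℝ) + 1) * (1 / 2) ^ n) * Real.Gamma (a * n + b) := by
          ring
  -- summability of the comparison function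
  have hgeom : Summable (fun n : ℕ => Real.exp c * c ^ (2 - b) * (((n : ℝ) + 1) * (1 / 2) ^ n)) := by
    apply Summable.mul_left
    have h1 : Summable (fun n : ℕ => (n : ℝ) ^ 1 * (1 / 2 : ℝ) ^ n) :=
      summable_pow_mul_geometric_of_norm_lt_one 1 (by norm_num)
    have h2 : Summable (fun n : ℕ => (1 / 2 : ℝ) ^ n) :=
      summable_geometric_of_lt_one (by norm_num) (by norm_num)
    simpa [add_mul, pow_one] using h1.add h2
  have hgeom' := (summable_nat_add_iff
    (f := fun n : ℕ => Real.exp c * c ^ (2 - b) * (((n : ℝ) + 1) * (1 / 2) ^ n)) N).mpr hgeom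
  rw [← summable_nat_add_iff N]
  refine Summable.of_nonneg_of_le (fun n => ?_) (fun n => ?_) hgeom'
  · have : 0 < Real.Gamma (a * (n + N) + b) := Real.Gamma_pos_of_pos (by positivity)
    positivity
  · exact_mod_cast key (n + N) (Nat.le_add_left N n)

lemma summable_ML (a b x : ℝ) (ha : 0 < a) (hb : 0 < b) :
    Summable (fun k : ℕ => x ^ k / Real.Gamma (a * k + b)) := by
  apply Summable.of_norm_bounded (summable_aux a b |x| ha hb (abs_nonneg x))
  intro k
  have hG : 0 < Real.Gamma (a * k + b) := Real.Gamma_pos_of_pos (by positivity)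
  rw [Real.norm_eq_abs, abs_div, abs_pow, abs_of_pos hG]
  gcongr
  nlinarith [pow_nonneg (abs_nonneg x) k, Nat.cast_nonneg (α := ℝ) k]

theorem deriv_mittagLeffler (α lam : ℝ) (hα : α ∈ Set.Ioo 0 1 ∪ Set.Ioo 1 2)
    (hlam : 0 < lam) (t : ℝ) (ht : 0 < t) :
    HasDerivAt (fun s : ℝ => ML α 1 (-lam * s ^ α))
      (-lam * t ^ (α - 1) * ML α α (-lam * t ^ α)) t := by
  have hα0 : 0 < α := by
    rcases hα with h | h
    · exact h.1
    · linarith [h.1]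
  set A : ℝ := lam * (t + 1) ^ α with hA
  have hApos : 0 < A := by
    have : (0:ℝ) < (t+1) ^ α := Real.rpow_pos_of_pos (by linarith) α
    positivity
  set B : ℝ := (t / 2) ^ (α - 1) + (t + 1) ^ (α - 1) with hB
  have hB1 : (0:ℝ) < (t/2) ^ (α-1) := Real.rpow_pos_of_pos (by linarith) _
  have hB2 : (0:ℝ) < (t+1) ^ (α-1) := Real.rpow_pos_of_pos (by linarith) _
  have hBpos : 0 < B := by positivity
  set K : ℝ := lam * (α * B) with hK
  have hKpos : 0 < K := by positivity
  have hGpos : ∀ n : ℕ, 0 < Real.Gamma (α * n + 1) := fun n =>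
    Real.Gamma_pos_of_pos (by positivity)
  -- summability of the derivative bounds
  have hu_sum : Summable (fun n : ℕ => (n : ℝ) * A ^ (n - 1) * K / Real.Gamma (α * n + 1)) := by
    refine Summable.of_nonneg_of_le (fun n => ?_) (fun n => ?_)
      ((summable_aux α 1 A hα0 one_pos hApos.le).mul_left (K / A))
    · have := hGpos n
      positivity
    · rcases Nat.eq_zero_or_pos n with rfl | hn
      · simp only [Nat.cast_zero, zero_mul, zero_div]
        have := hGpos 0
        positivity
      have hAn : A ^ (n - 1) * A = A ^ n := by
        rw [← pow_succ]
        congr 1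
        omega
      have hrhs : (K / A) * (((n:ℝ) + 1) * A ^ n / Real.Gamma (α * n + 1))
          = K * (((n:ℝ)+1) * A ^ (n-1)) / Real.Gamma (α * n + 1) := by
        rw [← hAn]
        field_simp
      rw [hrhs, div_le_div_iff₀ (hGpos n) (hGpos n)]
      have hpw : (0:ℝ) ≤ A ^ (n-1) := by positivity
      nlinarith [mul_nonneg (mul_nonneg hKpos.le hpw) (hGpos n).le]
  -- termwise derivatives
  have hderiv : ∀ (n : ℕ) (s : ℝ), s ∈ Set.Ioo (t/2) (t+1) →
      HasDerivAt (fun s : ℝ => (-lam * s ^ α) ^ n / Real.Gamma (α * n + 1))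
        (((n : ℝ) * (-lam * s ^ α) ^ (n - 1) * (-lam * (α * s ^ (α - 1))))
          / Real.Gamma (α * n + 1)) s := by
    intro n s hs
    have hs0 : 0 < s := lt_trans (by linarith) hs.1
    have h1 : HasDerivAt (fun s : ℝ => -lam * s ^ α) (-lam * (α * s ^ (α - 1))) s :=
      (Real.hasDerivAt_rpow_const (Or.inl hs0.ne')).const_mul (-lam)
    exact (h1.pow n).div_const _
  -- bounds on the derivatives
  have hbound : ∀ (n : ℕ) (s : ℝ), s ∈ Set.Ioo (t/2) (t+1) →
      ‖((n : ℝ) * (-lam * s ^ α) ^ (n - 1) * (-lam * (α * s ^ (α - 1))))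
          / Real.Gamma (α * n + 1)‖
        ≤ (n : ℝ) * A ^ (n - 1) * K / Real.Gamma (α * n + 1) := by
    intro n s hs
    have hs0 : 0 < s := lt_trans (by linarith) hs.1
    have hsα : 0 < s ^ α := Real.rpow_pos_of_pos hs0 α
    have hsα1 : 0 < s ^ (α - 1) := Real.rpow_pos_of_pos hs0 _
    have h1 : lam * s ^ α ≤ A := by
      have : s ^ α ≤ (t+1) ^ α := Real.rpow_le_rpow hs0.le (le_of_lt hs.2) hα0.le
      rw [hA]
      nlinarith
    have h2 : s ^ (α - 1) ≤ B := by
      rcases le_or_gt α 1 with hle | hgt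
      · have h3 : s ^ (α-1) ≤ (t/2) ^ (α-1) :=
          Real.rpow_le_rpow_of_nonpos (by linarith) hs.1.le (by linarith)
        rw [hB]; linarith
      · have h3 : s ^ (α-1) ≤ (t+1) ^ (α-1) :=
          Real.rpow_le_rpow hs0.le hs.2.le (by linarith)
        rw [hB]; linarith
    rw [Real.norm_eq_abs, abs_div, abs_of_pos (hGpos n),
      div_le_div_iff₀ (hGpos n) (hGpos n)]
    have habs : |(n:ℝ) * (-lam * s ^ α) ^ (n - 1) * (-lam * (α * s ^ (α - 1)))|
        ≤ (n:ℝ) * A ^ (n - 1) * K := by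
      rw [abs_mul, abs_mul, abs_of_nonneg (Nat.cast_nonneg (α := ℝ) n)]
      have e2 : |(-lam * s ^ α) ^ (n-1)| ≤ A ^ (n-1) := by
        rw [abs_pow]
        apply pow_le_pow_left₀ (abs_nonneg _)
        rw [abs_mul, abs_neg, abs_of_pos hlam, abs_of_pos hsα]
        exact h1
      have e3 : |(-lam * (α * s ^ (α - 1)))| ≤ K := by
        rw [abs_mul, abs_neg, abs_of_pos hlam, abs_of_pos (mul_pos hα0 hsα1), hK]
        nlinarith
      have e4 : (0:ℝ) ≤ |(-lam * s ^ α) ^ (n-1)| := abs_nonneg _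
      have e5 : (0:ℝ) ≤ |(-lam * (α * s ^ (α - 1)))| := abs_nonneg _
      have e6 : (0:ℝ) ≤ (n:ℝ) := Nat.cast_nonneg _
      have e7 : (0:ℝ) ≤ A ^ (n-1) := by positivity
      have := mul_le_mul (mul_le_mul_of_nonneg_left e2 e6) e3 e5 (by positivity)
      linarith
    nlinarith [hGpos n, abs_nonneg ((n:ℝ) * (-lam * s ^ α) ^ (n - 1)
      * (-lam * (α * s ^ (α - 1)))), hGpos n]
  -- summability at the point t
  have hsum_t : Summable (fun n : ℕ => (-lam * t ^ α) ^ n / Real.Gamma (α * n + 1)) :=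
    summable_ML α 1 (-lam * t ^ α) hα0 one_pos
  have ht_mem : t ∈ Set.Ioo (t/2) (t+1) := ⟨by linarith, by linarith⟩
  have main := hasDerivAt_tsum_of_isPreconnected hu_sum isOpen_Ioo isPreconnected_Ioo
    hderiv hbound ht_mem hsum_t ht_mem
  -- identify the function
  have heq : (fun s : ℝ => ML α 1 (-lam * s ^ α))
      = fun y : ℝ => ∑' n : ℕ, (-lam * y ^ α) ^ n / Real.Gamma (α * n + 1) := by
    funext s
    simp only [ML]
  -- identify the derivative value
  have hsum' : Summable (fun n : ℕ =>
      ((n : ℝ) * (-lam * t ^ α) ^ (n - 1) * (-lam * (α * t ^ (α - 1))))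
        / Real.Gamma (α * n + 1)) :=
    Summable.of_norm_bounded hu_sum (fun n => hbound n t ht_mem)
  have hval : (∑' n : ℕ, ((n : ℝ) * (-lam * t ^ α) ^ (n - 1) * (-lam * (α * t ^ (α - 1))))
        / Real.Gamma (α * n + 1))
      = -lam * t ^ (α - 1) * ML α α (-lam * t ^ α) := by
    rw [hsum'.tsum_eq_zero_add]
    have h0 : ((0:ℕ) : ℝ) * (-lam * t ^ α) ^ (0 - 1) * (-lam * (α * t ^ (α - 1)))
        / Real.Gamma (α * (0:ℕ) + 1) = 0 := by
      simp
    rw [h0, zero_add]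
    have hterm : ∀ n : ℕ,
        (((n+1 : ℕ) : ℝ) * (-lam * t ^ α) ^ ((n+1) - 1) * (-lam * (α * t ^ (α - 1))))
          / Real.Gamma (α * ((n+1 : ℕ) : ℝ) + 1)
        = (-lam * t ^ (α - 1)) * ((-lam * t ^ α) ^ n / Real.Gamma (α * n + α)) := by
      intro n
      have hGpos2 : 0 < Real.Gamma (α * n + α) := Real.Gamma_pos_of_pos (by positivity)
      have hGn : Real.Gamma (α * ((n+1 : ℕ) : ℝ) + 1)
          = (α * n + α) * Real.Gamma (α * n + α) := by
        have h1 : α * ((n+1 : ℕ) : ℝ) + 1 = (α * n + α) + 1 := by push_cast; ring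
        rw [h1, Real.Gamma_add_one (by positivity : (α * (n:ℝ) + α) ≠ 0)]
      rw [hGn, Nat.add_sub_cancel]
      have hne : α * (n:ℝ) + α ≠ 0 := by positivity
      push_cast
      field_simp
    calc (∑' n : ℕ, (((n+1 : ℕ) : ℝ) * (-lam * t ^ α) ^ ((n+1) - 1)
            * (-lam * (α * t ^ (α - 1)))) / Real.Gamma (α * ((n+1 : ℕ) : ℝ) + 1))
        = ∑' n : ℕ, (-lam * t ^ (α - 1)) * ((-lam * t ^ α) ^ n / Real.Gamma (α * n + α)) :=
          tsum_congr hterm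
      _ = (-lam * t ^ (α - 1)) * ∑' n : ℕ, (-lam * t ^ α) ^ n / Real.Gamma (α * n + α) :=
          tsum_mul_left
      _ = -lam * t ^ (α - 1) * ML α α (-lam * t ^ α) := by
          simp only [ML]
  rw [heq, ← hval]
  exact main
end

section
/- Let α > 0, λ ≥ 0, and p > 0 with p^α > λ. Then the Laplace transform of t ↦ t^{α−1} E_{α,α}(−λ t^α) at p equals 1/(p^α + λ); that is, ∫_0^∞ e^{−p t} t^{α−1} E_{α,α}(−λ t^α) dt = 1/(p^α + λ). -/
open MeasureTheory Real Set

lemma aux_integrable {s b : ℝ} (hs : 0 < s) (hb : 0 < b) :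
    IntegrableOn (fun t : ℝ => t ^ (s - 1) * Real.exp (-(b * t))) (Ioi 0) := by
  have := integrableOn_rpow_mul_exp_neg_mul_rpow (p := 1) (s := s - 1) (b := b)
    (by linarith) zero_lt_one hb
  refine this.congr_fun (fun t ht => ?_) measurableSet_Ioi
  beta_reduce
  rw [Real.rpow_one, neg_mul]

theorem laplace_mittagLeffler (α lam p : ℝ) (hα : 0 < α) (hlam : 0 ≤ lam)
    (hp : 0 < p) (hplam : lam < p ^ α) :
    ∫ t in Set.Ioi (0:ℝ), Real.exp (-p * t) * t ^ (α - 1) * ML α α (-lam * t ^ α)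
      = 1 / (p ^ α + lam) := by
  set q : ℝ := (p ^ α)⁻¹ with hq
  have hpα : 0 < p ^ α := Real.rpow_pos_of_pos hp α
  have hq0 : 0 < q := inv_pos.mpr hpα
  set F : ℕ → ℝ → ℝ := fun k t =>
    ((-lam) ^ k / Real.Gamma (α * (k + 1))) * (t ^ (α * (k + 1) - 1) * Real.exp (-(p * t)))
    with hF
  have hΓpos : ∀ k : ℕ, 0 < Real.Gamma (α * (k + 1)) := fun k =>
    Real.Gamma_pos_of_pos (by positivity)
  -- each F k is integrable
  have hFint : ∀ k : ℕ, Integrable (F k) (volume.restrict (Ioi 0)) := fun k =>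
    ((aux_integrable (by positivity) hp).const_mul _)
  -- value of each integral
  have hIval : ∀ k : ℕ, ∫ t in Ioi (0:ℝ), t ^ (α * (k + 1) - 1) * Real.exp (-(p * t))
      = (1 / p) ^ (α * (k + 1)) * Real.Gamma (α * (k + 1)) := fun k =>
    integral_rpow_mul_exp_neg_mul_Ioi (by positivity) hp
  have hq_pow : ∀ k : ℕ, (1 / p) ^ (α * ((k : ℝ) + 1)) = q ^ (k + 1) := by
    intro k
    have h1p : (0:ℝ) < 1 / p := by positivity
    rw [Real.rpow_mul h1p.le, one_div, Real.inv_rpow hp.le, ← hq]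
    rw [show ((k : ℝ) + 1) = ((k + 1 : ℕ) : ℝ) by push_cast; ring, Real.rpow_natCast]
  have hFval : ∀ k : ℕ, ∫ t in Ioi (0:ℝ), F k t = (-lam) ^ k * q ^ (k + 1) := by
    intro k
    rw [hF]
    simp only []
    rw [integral_const_mul, hIval k, hq_pow k]
    field_simp
  -- summability of the norms of the integrals
  have hsum : Summable fun k : ℕ => ∫ t in Ioi (0:ℝ), ‖F k t‖ := by
    have heq : ∀ k : ℕ, (∫ t in Ioi (0:ℝ), ‖F k t‖) = lam ^ k * q ^ (k + 1) := by
      intro k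
      have : (∫ t in Ioi (0:ℝ), ‖F k t‖)
          = ∫ t in Ioi (0:ℝ), (lam ^ k / Real.Gamma (α * (k + 1)))
              * (t ^ (α * (k + 1) - 1) * Real.exp (-(p * t))) := by
        refine setIntegral_congr_fun measurableSet_Ioi (fun t ht => ?_)
        have ht0 : (0:ℝ) < t := ht
        rw [hF]
        simp only [Real.norm_eq_abs, abs_mul, abs_div, abs_pow, abs_neg, abs_of_nonneg hlam,
          abs_of_pos (hΓpos k), abs_of_pos (Real.rpow_pos_of_pos ht0 _),
          abs_of_pos (Real.exp_pos _)]
      rw [this, integral_const_mul, hIval k, hq_pow k]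
      field_simp
    rw [funext heq]
    have : Summable fun k : ℕ => q * (lam * q) ^ k := by
      apply Summable.mul_left
      apply summable_geometric_of_lt_one (by positivity)
      rw [hq, mul_inv_lt_iff₀ hpα, one_mul]
      exact hplam
    refine this.congr fun k => ?_
    rw [mul_pow, pow_succ]; ring
  -- swap integral and sum
  have hmeas : ∀ k : ℕ, AEStronglyMeasurable (F k) (volume.restrict (Ioi 0)) :=
    fun k => (hFint k).1
  have hswap := MeasureTheory.integral_tsum_of_summable_integral_norm hFint hsum
  -- the integrand equals the pointwise sum on Ioi 0
  have hptwise : ∀ t ∈ Ioi (0:ℝ),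
      Real.exp (-p * t) * t ^ (α - 1) * ML α α (-lam * t ^ α) = ∑' k : ℕ, F k t := by
    intro t ht
    have ht0 : (0:ℝ) < t := ht
    rw [ML, ← tsum_mul_left]
    congr 1
    funext k
    have h1 : (-lam * t ^ α) ^ k = (-lam) ^ k * t ^ (α * k) := by
      rw [mul_pow, ← Real.rpow_natCast (t ^ α) k, ← Real.rpow_mul ht0.le]
    have h2 : t ^ (α - 1) * t ^ (α * (k:ℝ)) = t ^ (α * ((k:ℝ) + 1) - 1) := by
      rw [← Real.rpow_add ht0]
      congr 1; ring
    rw [h1, hF]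
    simp only []
    rw [show α * ((k:ℕ):ℝ) + α = α * ((k:ℝ) + 1) by ring]
    rw [neg_mul, ← h2]
    ring
  rw [setIntegral_congr_fun measurableSet_Ioi hptwise, ← hswap]
  -- compute the geometric sum
  have hval : ∀ k : ℕ, (∫ t in Ioi (0:ℝ), F k t) = q * (-lam * q) ^ k := by
    intro k
    rw [hFval k, mul_pow, pow_succ]; ring
  rw [funext hval, tsum_mul_left, tsum_geometric_of_norm_lt_one (by
      rw [Real.norm_eq_abs, abs_mul, abs_neg, abs_of_nonneg hlam, abs_of_pos hq0]
      rw [hq, mul_inv_lt_iff₀ hpα, one_mul]; exact hplam)]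
  rw [hq]
  have h1 : (1:ℝ) - -lam * (p ^ α)⁻¹ = (p ^ α + lam) / p ^ α := by
    field_simp
    ring
  rw [h1]
  field_simp
end

section
/- Let α ∈ (0,1), λ ≥ 0, T > 0, and g ∈ C¹([0,T]). Define u(t) = ∫_0^t (t−s)^{α−1} E_{α,α}(−λ (t−s)^α) g(s) ds. Then u is differentiable on (0,T) with u'(t) = g(0) t^{α−1} E_{α,α}(−λ t^α) + ∫_0^t s^{α−1} E_{α,α}(−λ s^α) g'(t−s) ds. -/
open MeasureTheory Set Filter intervalIntegral Topology


-- interpolation inequality from log-convexity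
lemma Gamma_interp {a y : ℝ} (ha : 0 < a) (ha1 : a < 1) (hy : 0 < y) :
    Real.Gamma (y + 1) ≤ Real.Gamma (y + a) * (y + a) ^ (1 - a) := by
  have hya : 0 < y + a := by linarith
  have hc := Real.convexOn_log_Gamma.2 (x := y + a) (y := y + a + 1)
    (mem_Ioi.2 hya) (mem_Ioi.2 (by linarith)) (le_of_lt ha) (by linarith : (0:ℝ) ≤ 1 - a) (by ring)
  have hcomb : a • (y + a) + (1 - a) • (y + a + 1) = y + 1 := by
    simp only [smul_eq_mul]; ring
  rw [hcomb] at hc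
  have hG1 : Real.Gamma (y + a + 1) = (y + a) * Real.Gamma (y + a) :=
    Real.Gamma_add_one hya.ne'
  have hGpos : 0 < Real.Gamma (y + a) := Real.Gamma_pos_of_pos hya
  have hGpos1 : 0 < Real.Gamma (y + 1) := Real.Gamma_pos_of_pos (by linarith)
  simp only [Function.comp_apply, smul_eq_mul] at hc
  rw [hG1, Real.log_mul hya.ne' hGpos.ne'] at hc
  have : Real.log (Real.Gamma (y + 1)) ≤
      Real.log (Real.Gamma (y + a)) + (1 - a) * Real.log (y + a) := by nlinarith
  calc Real.Gamma (y + 1) = Real.exp (Real.log (Real.Gamma (y + 1))) := (Real.exp_log hGpos1).symm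
    _ ≤ Real.exp (Real.log (Real.Gamma (y + a)) + (1 - a) * Real.log (y + a)) :=
        Real.exp_le_exp.2 this
    _ = Real.Gamma (y + a) * (y + a) ^ (1 - a) := by
        rw [Real.exp_add, Real.exp_log hGpos, Real.rpow_def_of_pos hya, mul_comm (Real.log _)]

lemma ML_summable {a b : ℝ} (ha : 0 < a) (ha1 : a < 1) (hb : 0 < b) (x : ℝ) :
    Summable (fun k : ℕ => x ^ k / Real.Gamma (a * k + b)) := by
  apply summable_of_ratio_norm_eventually_le (r := 1/2) (by norm_num)
  have t1 : Tendsto (fun k : ℕ => a * k + b) atTop atTop := by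
    apply tendsto_atTop_add_const_right
    exact (tendsto_natCast_atTop_atTop).const_mul_atTop ha
  have t2 : Tendsto (fun k : ℕ => (a * k + b + a) ^ (-a)) atTop (𝓝 0) :=
    (tendsto_rpow_neg_atTop ha).comp (tendsto_atTop_add_const_right _ a t1)
  have t3 : Tendsto (fun k : ℕ => a / (a * k + b)) atTop (𝓝 0) :=
    tendsto_const_nhds.div_atTop t1
  have t4 : Tendsto (fun k : ℕ => |x| * ((a * k + b + a) ^ (-a) * (1 + a / (a * k + b))))
      atTop (𝓝 0) := by
    have h := t2.mul (t3.const_add 1)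
    have h2 := h.const_mul |x|
    simpa [add_comm] using h2
  have hev : ∀ᶠ k : ℕ in atTop,
      |x| * ((a * k + b + a) ^ (-a) * (1 + a / (a * k + b))) < 1/2 :=
    t4.eventually_lt_const (by norm_num)
  filter_upwards [hev] with k hk
  set y := a * k + b with hydef
  have hy : 0 < y := by positivity
  have hya : 0 < y + a := by linarith
  have hGy : 0 < Real.Gamma y := Real.Gamma_pos_of_pos hy
  have hGya : 0 < Real.Gamma (y + a) := Real.Gamma_pos_of_pos hya
  have key : y * Real.Gamma y ≤ Real.Gamma (y + a) * (y + a) ^ (1 - a) := by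
    have := Gamma_interp ha ha1 hy
    rwa [Real.Gamma_add_one hy.ne'] at this
  push_cast
  rw [show a * ((k : ℝ) + 1) + b = y + a by rw [hydef]; ring]
  rw [Real.norm_eq_abs, Real.norm_eq_abs, abs_div, abs_div, abs_of_pos hGya, abs_of_pos hGy,
    abs_pow, abs_pow]
  have hkey2 : (1:ℝ) / Real.Gamma (y + a) ≤ (y + a) ^ (1 - a) / (y * Real.Gamma y) := by
    rw [div_le_div_iff₀ hGya (by positivity)]
    nlinarith [key]
  have hc : |x| * (y + a) ^ (1 - a) / y ≤ 1/2 := by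
    have h2 : (y + a) ^ ((1:ℝ) - a) = (y + a) * (y + a) ^ (-a) := by
      rw [show (1:ℝ) - a = 1 + (-a) by ring, Real.rpow_add hya, Real.rpow_one]
    rw [h2]
    have h4 : 1 + a / y = (y + a) / y := by field_simp
    have h3 : |x| * ((y + a) * (y + a) ^ (-a)) / y
        = |x| * ((y + a) ^ (-a) * (1 + a / y)) := by
      rw [h4]; ring
    rw [h3]
    linarith [hk]
  calc |x| ^ (k + 1) / Real.Gamma (y + a)
      = (|x| ^ k * |x|) * (1 / Real.Gamma (y + a)) := by rw [pow_succ]; ring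
    _ ≤ (|x| ^ k * |x|) * ((y + a) ^ (1 - a) / (y * Real.Gamma y)) := by
        apply mul_le_mul_of_nonneg_left hkey2 (by positivity)
    _ = (|x| * (y + a) ^ (1 - a) / y) * (|x| ^ k / Real.Gamma y) := by
        field_simp
    _ ≤ 1/2 * (|x| ^ k / Real.Gamma y) :=
        mul_le_mul_of_nonneg_right hc (by positivity)

lemma ML_continuous {a b : ℝ} (ha : 0 < a) (ha1 : a < 1) (hb : 0 < b) :
    Continuous (ML a b) := by
  rw [continuous_iff_continuousAt]
  intro x
  have hcont : ContinuousOn (fun y : ℝ => ∑' k : ℕ, y ^ k / Real.Gamma (a * k + b))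
      (Icc (-(|x|+1)) (|x|+1)) := by
    apply continuousOn_tsum (u := fun k : ℕ => (|x|+1) ^ k / Real.Gamma (a * k + b))
    · intro k; exact ((continuous_pow k).div_const _).continuousOn
    · exact ML_summable ha ha1 hb _
    · intro k y hy
      have hΓ : 0 < Real.Gamma (a * k + b) := Real.Gamma_pos_of_pos (by positivity)
      rw [Real.norm_eq_abs, abs_div, abs_of_pos hΓ, abs_pow]
      have hyb : |y| ≤ |x| + 1 := abs_le.2 ⟨hy.1, hy.2⟩
      gcongr
  have : ContinuousAt (fun y : ℝ => ∑' k : ℕ, y ^ k / Real.Gamma (a * k + b)) x := by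
    apply hcont.continuousAt (Icc_mem_nhds ?_ ?_)
    · have := neg_abs_le x; linarith
    · have := le_abs_self x; linarith
  exact this

noncomputable def Kf (α lam : ℝ) (s : ℝ) : ℝ := s ^ (α - 1) * ML α α (-lam * s ^ α)

lemma Kf_measurable (α lam : ℝ) (hα : 0 < α) (hα1 : α < 1) : Measurable (Kf α lam) := by
  apply (measurable_id.pow_const (α - 1)).mul
  exact (ML_continuous hα hα1 hα).measurable.comp
    (measurable_const.mul (measurable_id.pow_const α))

lemma Kf_contAt (α lam : ℝ) (hα : 0 < α) (hα1 : α < 1) {s : ℝ} (hs : 0 < s) :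
    ContinuousAt (Kf α lam) s := by
  have h1 : ContinuousAt (fun x : ℝ => x ^ (α - 1)) s :=
    Real.continuousAt_rpow_const s _ (Or.inl hs.ne')
  have h2 : ContinuousAt (fun x : ℝ => x ^ α) s :=
    Real.continuousAt_rpow_const s _ (Or.inl hs.ne')
  exact h1.mul ((ML_continuous hα hα1 hα).continuousAt.comp (continuousAt_const.mul h2))

lemma Kf_bound (α lam c : ℝ) (hα : 0 < α) (hα1 : α < 1) (hlam : 0 ≤ lam) (hc : 0 ≤ c) :
    ∃ M : ℝ, 0 ≤ M ∧ ∀ s ∈ Set.Ioc (0:ℝ) c, |Kf α lam s| ≤ M * s ^ (α - 1) := by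
  obtain ⟨C, hC⟩ := (isCompact_Icc (a := -(lam * c ^ α)) (b := 0)).exists_bound_of_continuousOn
    (ML_continuous hα hα1 hα).continuousOn
  refine ⟨max C 0, le_max_right _ _, fun s hs => ?_⟩
  have hs0 : (0:ℝ) ≤ s ^ (α - 1) := Real.rpow_nonneg hs.1.le _
  have hmem : -lam * s ^ α ∈ Set.Icc (-(lam * c ^ α)) 0 := by
    constructor
    · have : s ^ α ≤ c ^ α := Real.rpow_le_rpow hs.1.le hs.2 hα.le
      nlinarith
    · have : (0:ℝ) ≤ s ^ α := Real.rpow_nonneg hs.1.le _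
      nlinarith
  have := hC _ hmem
  rw [Real.norm_eq_abs] at this
  rw [Kf, abs_mul, abs_of_nonneg hs0, mul_comm]
  apply mul_le_mul_of_nonneg_right _ hs0
  exact this.trans (le_max_left _ _)

lemma Kf_integrable (α lam c : ℝ) (hα : 0 < α) (hα1 : α < 1) (hlam : 0 ≤ lam) (hc : 0 ≤ c) :
    IntervalIntegrable (Kf α lam) volume 0 c := by
  obtain ⟨M, hM0, hM⟩ := Kf_bound α lam c hα hα1 hlam hc
  have hint : IntervalIntegrable (fun s : ℝ => M * s ^ (α - 1)) volume 0 c :=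
    (intervalIntegral.intervalIntegrable_rpow' (by linarith)).const_mul M
  apply hint.mono_fun ((Kf_measurable α lam hα hα1).aestronglyMeasurable)
  rw [uIoc_of_le hc, Filter.EventuallyLE]
  rw [ae_restrict_iff' measurableSet_Ioc]
  apply ae_of_all
  intro s hs
  have hs0 : (0:ℝ) ≤ s ^ (α - 1) := Real.rpow_nonneg hs.1.le _
  rw [Real.norm_eq_abs, Real.norm_eq_abs, abs_of_nonneg (by positivity : (0:ℝ) ≤ M * s ^ (α-1))]
  exact hM s hs

lemma fubini_tri {K ψ : ℝ → ℝ} {τ : ℝ} (hτ : 0 < τ)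
    (hKm : Measurable K) (hKint : IntegrableOn K (Ioc 0 τ))
    (hψ : Continuous ψ) :
    ∫ x in (0:ℝ)..τ, K x * (∫ ρ in x..τ, ψ (ρ - x))
      = ∫ ρ in (0:ℝ)..τ, ∫ x in (0:ℝ)..ρ, K x * ψ (ρ - x) := by
  set μ := volume.restrict (Ioc (0:ℝ) τ) with hμ
  have hfin : IsFiniteMeasure μ := by
    constructor
    rw [hμ, Measure.restrict_apply_univ]
    exact measure_Ioc_lt_top
  set H : ℝ → ℝ → ℝ := fun x ρ => if x ≤ ρ then K x * ψ (ρ - x) else 0 with hH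
  obtain ⟨C, hC⟩ := (isCompact_Icc (a := -τ) (b := τ)).exists_bound_of_continuousOn
    hψ.continuousOn
  set C' := max C 0 with hC'
  have hC'0 : 0 ≤ C' := le_max_right _ _
  have hψb : ∀ y ∈ Icc (-τ) τ, |ψ y| ≤ C' := fun y hy => (hC y hy).trans (le_max_left _ _)
  have hHm : Measurable (Function.uncurry H) := by
    apply Measurable.ite (measurableSet_le measurable_fst measurable_snd)
    · exact (hKm.comp measurable_fst).mul
        (hψ.measurable.comp (measurable_snd.sub measurable_fst))
    · exact measurable_const
  have hKnorm : Integrable (fun x => ‖K x‖) μ := hKint.norm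
  have hHint : Integrable (Function.uncurry H) (μ.prod μ) := by
    apply Integrable.mono' (g := fun p : ℝ × ℝ => ‖K p.1‖ * C')
    · exact Integrable.mul_prod hKnorm (integrable_const C')
    · exact hHm.aestronglyMeasurable
    · rw [hμ, Measure.prod_restrict]
      rw [ae_restrict_iff' (measurableSet_Ioc.prod measurableSet_Ioc)]
      apply ae_of_all
      rintro ⟨x, ρ⟩ hp
      obtain ⟨hx, hρ⟩ := hp
      simp only [Function.uncurry, hH]
      by_cases hxρ : x ≤ ρ
      · rw [if_pos hxρ, Real.norm_eq_abs, abs_mul]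
        have hmem : ρ - x ∈ Icc (-τ) τ := by
          simp only [mem_Ioc] at hx hρ
          constructor <;> [linarith [hx.2, hρ.1]; linarith [hx.1, hρ.2]]
        exact mul_le_mul_of_nonneg_left (hψb _ hmem) (abs_nonneg _)
      · rw [if_neg hxρ]
        simp
        positivity
  have swap := MeasureTheory.integral_integral_swap (f := H) hHint
  have lhs_eq : ∫ x in (0:ℝ)..τ, K x * (∫ ρ in x..τ, ψ (ρ - x)) = ∫ x, (∫ ρ, H x ρ ∂μ) ∂μ := by
    rw [intervalIntegral.integral_of_le hτ.le]
    apply setIntegral_congr_fun measurableSet_Ioc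
    intro x hx
    dsimp only
    have step1 : ∫ ρ, H x ρ ∂μ = ∫ ρ in Ioc 0 τ, (Ici x).indicator (fun ρ => K x * ψ (ρ - x)) ρ := by
      apply setIntegral_congr_fun measurableSet_Ioc
      intro ρ _
      simp [hH, Set.indicator_apply, mem_Ici]
    rw [step1, setIntegral_indicator measurableSet_Ici]
    have hset : Ioc (0:ℝ) τ ∩ Ici x = Icc x τ := by
      ext ρ
      simp only [mem_inter_iff, mem_Ioc, mem_Ici, mem_Icc]
      constructor
      · rintro ⟨⟨_, h2⟩, h3⟩; exact ⟨h3, h2⟩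
      · rintro ⟨h1, h2⟩; exact ⟨⟨lt_of_lt_of_le hx.1 h1, h2⟩, h1⟩
    rw [hset, integral_Icc_eq_integral_Ioc, ← intervalIntegral.integral_of_le hx.2,
      ← intervalIntegral.integral_const_mul]
  have rhs_eq : ∫ ρ in (0:ℝ)..τ, (∫ x in (0:ℝ)..ρ, K x * ψ (ρ - x)) = ∫ ρ, (∫ x, H x ρ ∂μ) ∂μ := by
    rw [intervalIntegral.integral_of_le hτ.le]
    apply setIntegral_congr_fun measurableSet_Ioc
    intro ρ hρ
    dsimp only
    have step1 : ∫ x, H x ρ ∂μ = ∫ x in Ioc 0 τ, (Iic ρ).indicator (fun x => K x * ψ (ρ - x)) x := by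
      apply setIntegral_congr_fun measurableSet_Ioc
      intro x _
      simp [hH, Set.indicator_apply, mem_Iic]
    rw [step1, setIntegral_indicator measurableSet_Iic]
    have hset : Ioc (0:ℝ) τ ∩ Iic ρ = Ioc 0 ρ := by
      ext x
      simp only [mem_inter_iff, mem_Ioc, mem_Iic]
      constructor
      · rintro ⟨⟨h1, _⟩, h3⟩; exact ⟨h1, h3⟩
      · rintro ⟨h1, h2⟩; exact ⟨⟨h1, h2.trans hρ.2⟩, h2⟩
    rw [hset, ← intervalIntegral.integral_of_le hρ.1.le]
  rw [lhs_eq, rhs_eq, swap]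

lemma key_identity (α lam T : ℝ) (hα0 : 0 < α) (hα1 : α < 1) (hlam : 0 ≤ lam) (hT : 0 < T)
    (g ψ : ℝ → ℝ) (hψcont : Continuous ψ)
    (hFTC : ∀ y ∈ Icc (0:ℝ) T, g y = g 0 + ∫ r in (0:ℝ)..y, ψ r)
    (τ : ℝ) (hτ : τ ∈ Ioo (0:ℝ) T) :
    (∫ s in (0:ℝ)..τ, (τ - s) ^ (α - 1) * ML α α (-lam * (τ - s) ^ α) * g s)
      = g 0 * (∫ s in (0:ℝ)..τ, Kf α lam s)
        + ∫ ρ in (0:ℝ)..τ, (∫ x in (0:ℝ)..ρ, Kf α lam x * ψ (ρ - x)) := by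
  obtain ⟨hτ0, hτT⟩ := hτ
  have hA : (∫ s in (0:ℝ)..τ, (τ - s) ^ (α - 1) * ML α α (-lam * (τ - s) ^ α) * g s)
      = ∫ s in (0:ℝ)..τ, Kf α lam (τ - s) * g s := rfl
  have hB : (∫ s in (0:ℝ)..τ, Kf α lam (τ - s) * g s)
      = ∫ x in (0:ℝ)..τ, Kf α lam x * g (τ - x) := by
    have h := intervalIntegral.integral_comp_sub_left (a := 0) (b := τ)
      (fun y => Kf α lam y * g (τ - y)) τ
    simp only [sub_sub_cancel, sub_zero, sub_self] at h
    exact h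
  have hC : (∫ x in (0:ℝ)..τ, Kf α lam x * g (τ - x))
      = ∫ x in (0:ℝ)..τ,
          (Kf α lam x * g 0 + Kf α lam x * ∫ r in (0:ℝ)..(τ - x), ψ r) := by
    apply intervalIntegral.integral_congr
    intro x hx
    dsimp only
    rw [uIcc_of_le hτ0.le] at hx
    rw [hFTC (τ - x) ⟨by linarith [hx.1, hx.2], by linarith [hx.1, hτT.le]⟩]
    ring
  have hKint : IntervalIntegrable (Kf α lam) volume 0 τ :=
    Kf_integrable α lam τ hα0 hα1 hlam hτ0.le
  obtain ⟨Cψ, hCψb⟩ := (isCompact_Icc (a := (0:ℝ)) (b := T)).exists_bound_of_continuousOn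
    hψcont.continuousOn
  set C' := max Cψ 0 with hC'
  have hC'0 : (0:ℝ) ≤ C' := le_max_right _ _
  have hψb : ∀ y ∈ Icc (0:ℝ) T, |ψ y| ≤ C' := fun y hy => (hCψb y hy).trans (le_max_left _ _)
  have h1 : IntervalIntegrable (fun x => Kf α lam x * g 0) volume 0 τ := hKint.mul_const _
  have hP : Continuous (fun x : ℝ => ∫ r in (0:ℝ)..(τ - x), ψ r) := by
    have hprim : Continuous (fun y : ℝ => ∫ r in (0:ℝ)..y, ψ r) :=
      intervalIntegral.continuous_primitive (fun a b => hψcont.intervalIntegrable a b) 0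
    exact hprim.comp (continuous_const.sub continuous_id)
  have h2 : IntervalIntegrable (fun x => Kf α lam x * ∫ r in (0:ℝ)..(τ - x), ψ r) volume 0 τ := by
    apply IntervalIntegrable.mono_fun ((hKint.norm).mul_const (C' * T))
    · exact ((Kf_measurable α lam hα0 hα1).aestronglyMeasurable.restrict).mul
        hP.aestronglyMeasurable.restrict
    · rw [uIoc_of_le hτ0.le, Filter.EventuallyLE, ae_restrict_iff' measurableSet_Ioc]
      apply ae_of_all
      intro x hx
      have hxτ : 0 ≤ τ - x := by linarith [hx.2]
      have hb : ‖∫ r in (0:ℝ)..(τ - x), ψ r‖ ≤ C' * |τ - x - 0| := by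
        apply intervalIntegral.norm_integral_le_of_norm_le_const
        intro r hr
        rw [uIoc_of_le hxτ] at hr
        exact (hψb r ⟨hr.1.le, by linarith [hr.2, hx.1, hτT.le]⟩)
      simp only [Real.norm_eq_abs, abs_mul, abs_abs,
        abs_of_nonneg (by positivity : (0:ℝ) ≤ C' * T)]
      apply mul_le_mul_of_nonneg_left _ (abs_nonneg _)
      rw [Real.norm_eq_abs] at hb
      apply hb.trans
      rw [sub_zero, abs_of_nonneg hxτ]
      have : τ - x ≤ T := by linarith [hx.1, hτT.le]
      nlinarith
  have hsplit := intervalIntegral.integral_add h1 h2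
  have hfirst : (∫ x in (0:ℝ)..τ, Kf α lam x * g 0)
      = g 0 * ∫ s in (0:ℝ)..τ, Kf α lam s := by
    rw [intervalIntegral.integral_mul_const]; ring
  have hE : (fun x : ℝ => Kf α lam x * ∫ r in (0:ℝ)..(τ - x), ψ r)
      = fun x : ℝ => Kf α lam x * ∫ ρ in x..τ, ψ (ρ - x) := by
    funext x
    congr 1
    have h := intervalIntegral.integral_comp_sub_right (a := x) (b := τ) ψ x
    simp only [sub_self] at h
    exact h.symm
  have hfub := fubini_tri hτ0 (Kf_measurable α lam hα0 hα1) hKint.1 hψcont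
  rw [hA, hB, hC, hsplit, hfirst]
  congr 1
  rw [← hfub, hE]

lemma Phi_contAt (α lam T : ℝ) (hα0 : 0 < α) (hα1 : α < 1) (hlam : 0 ≤ lam) (hT : 0 < T)
    (ψ : ℝ → ℝ) (hψcont : Continuous ψ) {ρ₀ : ℝ} (hρ₀ : ρ₀ ∈ Ioo 0 T) :
    ContinuousAt (fun ρ => ∫ x in (0:ℝ)..ρ, Kf α lam x * ψ (ρ - x)) ρ₀ := by
  set G : ℝ → ℝ → ℝ := fun ρ x => (Ioc (0:ℝ) ρ).indicator (Kf α lam) x * ψ (ρ - x) with hG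
  obtain ⟨Cψ, hCψb⟩ := (isCompact_Icc (a := (0:ℝ)) (b := T)).exists_bound_of_continuousOn
    hψcont.continuousOn
  set C' := max Cψ 0 with hC'
  have hC'0 : (0:ℝ) ≤ C' := le_max_right _ _
  have hψb : ∀ y ∈ Icc (0:ℝ) T, |ψ y| ≤ C' := fun y hy => (hCψb y hy).trans (le_max_left _ _)
  have hKm := Kf_measurable α lam hα0 hα1
  have hcont : ContinuousAt (fun ρ => ∫ x, G ρ x) ρ₀ := by
    apply continuousAt_of_dominated
      (bound := (Ioc (0:ℝ) T).indicator (fun x => |Kf α lam x| * C'))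
    · apply Eventually.of_forall
      intro ρ
      exact ((hKm.indicator measurableSet_Ioc).mul
        (hψcont.measurable.comp (measurable_const.sub measurable_id))).aestronglyMeasurable
    · filter_upwards [Ioo_mem_nhds hρ₀.1 hρ₀.2] with ρ hρ
      apply ae_of_all
      intro x
      simp only [hG]
      by_cases hx : x ∈ Ioc 0 ρ
      · have hx2 : x ∈ Ioc (0:ℝ) T := Set.mem_Ioc.2 ⟨hx.1, hx.2.trans hρ.2.le⟩
        rw [Set.indicator_of_mem hx, Set.indicator_of_mem hx2]
        rw [Real.norm_eq_abs, abs_mul]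
        apply mul_le_mul_of_nonneg_left _ (abs_nonneg _)
        apply hψb
        constructor
        · linarith [hx.2]
        · linarith [hx.1, hρ.2.le]
      · rw [Set.indicator_of_notMem hx]
        simp only [zero_mul, norm_zero]
        apply Set.indicator_apply_nonneg
        intro _
        positivity
    · rw [integrable_indicator_iff measurableSet_Ioc]
      exact ((Kf_integrable α lam T hα0 hα1 hlam hT.le).1.norm.mul_const C')
    · have hae : ∀ᵐ x : ℝ, x ≠ ρ₀ := by
        rw [ae_iff]
        simp only [ne_eq, not_not]
        have : {x : ℝ | x = ρ₀} = {ρ₀} := by ext; simp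
        rw [this]
        exact measure_singleton _
      filter_upwards [hae] with x hx
      have hc1 : ContinuousAt (fun ρ => (Ioc (0:ℝ) ρ).indicator (Kf α lam) x) ρ₀ := by
        have hev : (fun ρ => (Ioc (0:ℝ) ρ).indicator (Kf α lam) x)
            =ᶠ[𝓝 ρ₀] (fun _ => (Ioc (0:ℝ) ρ₀).indicator (Kf α lam) x) := by
          rcases lt_or_gt_of_ne hx with h | h
          · filter_upwards [Ioi_mem_nhds h] with ρ hρ
            simp [Set.indicator_apply, Set.mem_Ioc, le_of_lt (mem_Ioi.1 hρ), le_of_lt h]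
          · filter_upwards [Iio_mem_nhds h] with ρ hρ
            simp [Set.indicator_apply, Set.mem_Ioc, not_le.mpr (mem_Iio.1 hρ), not_le.mpr h]
        exact continuousAt_const.congr hev.symm
      exact hc1.mul ((hψcont.comp (continuous_id.sub continuous_const)).continuousAt)
  apply hcont.congr
  filter_upwards [Ioi_mem_nhds hρ₀.1] with ρ hρ
  rw [intervalIntegral.integral_of_le (le_of_lt hρ), ← MeasureTheory.integral_indicator measurableSet_Ioc]
  congr 1
  funext x
  simp only [hG]
  by_cases hx : x ∈ Ioc 0 ρ
  · rw [Set.indicator_of_mem hx, Set.indicator_of_mem hx]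
  · rw [Set.indicator_of_notMem hx, Set.indicator_of_notMem hx, zero_mul]

lemma ae_ne_vol (c : ℝ) : ∀ᵐ x : ℝ, x ≠ c := by
  rw [ae_iff]
  simp only [ne_eq, not_not]
  have : {x : ℝ | x = c} = {c} := by ext; simp
  rw [this]
  exact measure_singleton _

theorem deriv_fractional_convolution (α lam T : ℝ) (hα : α ∈ Set.Ioo (0:ℝ) 1)
    (hlam : 0 ≤ lam) (hT : 0 < T) (g : ℝ → ℝ) (hg : ContDiffOn ℝ 1 g (Set.Icc 0 T))
    (t : ℝ) (ht : t ∈ Set.Ioo 0 T) :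
    HasDerivAt
      (fun τ : ℝ => ∫ s in (0:ℝ)..τ, (τ - s) ^ (α - 1) * ML α α (-lam * (τ - s) ^ α) * g s)
      (g 0 * t ^ (α - 1) * ML α α (-lam * t ^ α)
        + ∫ s in (0:ℝ)..t, s ^ (α - 1) * ML α α (-lam * s ^ α) * deriv g (t - s)) t := by
  obtain ⟨hα0, hα1⟩ := hα
  obtain ⟨ht0, htT⟩ := ht
  have hUD : UniqueDiffOn ℝ (Icc (0:ℝ) T) := uniqueDiffOn_Icc hT
  have hdc : ContinuousOn (derivWithin g (Icc 0 T)) (Icc 0 T) :=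
    hg.continuousOn_derivWithin hUD le_rfl
  set ψ : ℝ → ℝ := fun y => derivWithin g (Icc 0 T) (max 0 (min y T)) with hψdef
  have hprojmem : ∀ y : ℝ, max 0 (min y T) ∈ Icc (0:ℝ) T := fun y =>
    ⟨le_max_left _ _, max_le hT.le (min_le_right _ _)⟩
  have hψcont : Continuous ψ :=
    hdc.comp_continuous (continuous_const.max (continuous_id.min continuous_const)) hprojmem
  have hψeq : ∀ y ∈ Icc (0:ℝ) T, ψ y = derivWithin g (Icc 0 T) y := by
    intro y hy
    rw [hψdef]
    dsimp only
    rw [min_eq_left hy.2, max_eq_right hy.1]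
  have hgderiv : ∀ y ∈ Ioo (0:ℝ) T, HasDerivAt g (ψ y) y := by
    intro y hy
    have h1 : HasDerivWithinAt g (derivWithin g (Icc 0 T) y) (Icc 0 T) y :=
      (hg.differentiableOn one_ne_zero y (Ioo_subset_Icc_self hy)).hasDerivWithinAt
    have h2 := h1.hasDerivAt (Icc_mem_nhds hy.1 hy.2)
    rwa [← hψeq y (Ioo_subset_Icc_self hy)] at h2
  have hFTC : ∀ y ∈ Icc (0:ℝ) T, g y = g 0 + ∫ r in (0:ℝ)..y, ψ r := by
    intro y hy
    have h := intervalIntegral.integral_eq_sub_of_hasDeriv_right_of_le hy.1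
      (hg.continuousOn.mono (Icc_subset_Icc le_rfl hy.2))
      (fun x hx => (hgderiv x ⟨hx.1, lt_of_lt_of_le hx.2 hy.2⟩).hasDerivWithinAt)
      (hψcont.intervalIntegrable _ _)
    rw [h]; ring
  -- derivative of the F part
  have hKint_t : IntervalIntegrable (Kf α lam) volume 0 t :=
    Kf_integrable α lam t hα0 hα1 hlam ht0.le
  have hFderiv : HasDerivAt (fun τ => ∫ s in (0:ℝ)..τ, Kf α lam s) (Kf α lam t) t :=
    intervalIntegral.integral_hasDerivAt_right hKint_t
      ((Kf_measurable α lam hα0 hα1).stronglyMeasurable.stronglyMeasurableAtFilter)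
      (Kf_contAt α lam hα0 hα1 ht0)
  -- the Φ part
  set Φ : ℝ → ℝ := fun ρ => ∫ x in (0:ℝ)..ρ, Kf α lam x * ψ (ρ - x) with hΦdef
  have hΦcont : ∀ ρ ∈ Ioo (0:ℝ) T, ContinuousAt Φ ρ := fun ρ hρ =>
    Phi_contAt α lam T hα0 hα1 hlam hT ψ hψcont hρ
  have hΦconton : ContinuousOn Φ (Ioo 0 T) := fun ρ hρ =>
    (hΦcont ρ hρ).continuousWithinAt
  have hsub : Ioc (0:ℝ) t ⊆ Ioo (0:ℝ) T := fun x hx => ⟨hx.1, lt_of_le_of_lt hx.2 htT⟩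
  obtain ⟨Cψ, hCψb⟩ := (isCompact_Icc (a := (0:ℝ)) (b := T)).exists_bound_of_continuousOn
    hψcont.continuousOn
  set C' := max Cψ 0 with hC'
  have hC'0 : (0:ℝ) ≤ C' := le_max_right _ _
  have hψb : ∀ y ∈ Icc (0:ℝ) T, |ψ y| ≤ C' := fun y hy => (hCψb y hy).trans (le_max_left _ _)
  have hKintT : IntervalIntegrable (Kf α lam) volume 0 T :=
    Kf_integrable α lam T hα0 hα1 hlam hT.le
  set B : ℝ := ∫ x in (0:ℝ)..T, |Kf α lam x| * C' with hB
  have hΦbound : ∀ ρ ∈ Ioc (0:ℝ) t, ‖Φ ρ‖ ≤ B := by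
    intro ρ hρ
    have hρT : ρ ≤ T := hρ.2.trans htT.le
    have hss : uIcc (0:ℝ) ρ ⊆ uIcc (0:ℝ) T := by
      rw [uIcc_of_le hρ.1.le, uIcc_of_le hT.le]
      exact Icc_subset_Icc le_rfl hρT
    have hbint : IntervalIntegrable (fun x => |Kf α lam x| * C') volume 0 ρ :=
      (hKintT.norm.mono_set hss).mul_const _
    have hae : ∀ᵐ x ∂(volume.restrict (Set.uIoc (0:ℝ) ρ)),
        ‖Kf α lam x * ψ (ρ - x)‖ ≤ |Kf α lam x| * C' := by
      rw [uIoc_of_le hρ.1.le, ae_restrict_iff' measurableSet_Ioc]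
      apply ae_of_all
      intro x hx
      rw [Real.norm_eq_abs, abs_mul]
      apply mul_le_mul_of_nonneg_left _ (abs_nonneg _)
      apply hψb
      constructor
      · linarith [hx.2]
      · linarith [hx.1, hρT]
    have step1 : ‖Φ ρ‖ ≤ ∫ x in (0:ℝ)..ρ, |Kf α lam x| * C' := by
      have h0 := intervalIntegral.norm_integral_le_of_norm_le hρ.1.le
        ((ae_restrict_iff' measurableSet_Ioc).1 (by rwa [uIoc_of_le hρ.1.le] at hae)) hbint
      have h1 : |∫ x in (0:ℝ)..ρ, |Kf α lam x| * C'| = ∫ x in (0:ℝ)..ρ, |Kf α lam x| * C' :=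
        abs_of_nonneg (intervalIntegral.integral_nonneg hρ.1.le (fun u _ => by positivity))
      exact h0
    apply step1.trans
    rw [hB]
    apply intervalIntegral.integral_mono_interval le_rfl hρ.1.le hρT
    · filter_upwards with x
      positivity
    · exact hKintT.norm.mul_const _
  have hΦint : IntervalIntegrable Φ volume 0 t := by
    rw [intervalIntegrable_iff_integrableOn_Ioc_of_le ht0.le]
    apply Integrable.mono' (g := fun _ => B) (integrable_const B)
      ((hΦconton.mono hsub).aestronglyMeasurable measurableSet_Ioc)
    rw [ae_restrict_iff' measurableSet_Ioc]
    exact ae_of_all _ hΦbound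
  have hΦderiv : HasDerivAt (fun τ => ∫ ρ in (0:ℝ)..τ, Φ ρ) (Φ t) t :=
    intervalIntegral.integral_hasDerivAt_right hΦint
      ⟨Ioo 0 T, Ioo_mem_nhds ht0 htT, hΦconton.aestronglyMeasurable measurableSet_Ioo⟩
      (hΦcont t ⟨ht0, htT⟩)
  have hsum := (hFderiv.const_mul (g 0)).add hΦderiv
  have hev : (fun τ : ℝ => ∫ s in (0:ℝ)..τ, (τ - s) ^ (α - 1) * ML α α (-lam * (τ - s) ^ α) * g s)
      =ᶠ[𝓝 t] (fun τ => g 0 * (∫ s in (0:ℝ)..τ, Kf α lam s) + ∫ ρ in (0:ℝ)..τ, Φ ρ) := by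
    filter_upwards [Ioo_mem_nhds ht0 htT] with τ hτ
    exact key_identity α lam T hα0 hα1 hlam hT g ψ hψcont hFTC τ hτ
  have hmain := hsum.congr_of_eventuallyEq hev
  have hval : g 0 * Kf α lam t + Φ t
      = g 0 * t ^ (α - 1) * ML α α (-lam * t ^ α)
        + ∫ s in (0:ℝ)..t, s ^ (α - 1) * ML α α (-lam * s ^ α) * deriv g (t - s) := by
    congr 1
    · rw [Kf, mul_assoc]
    · rw [hΦdef]
      apply intervalIntegral.integral_congr_ae
      filter_upwards [ae_ne_vol t] with s hs hsmem
      rw [uIoc_of_le ht0.le] at hsmem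
      have hmem : t - s ∈ Ioo (0:ℝ) T := by
        constructor
        · cases lt_or_eq_of_le hsmem.2 with
          | inl h => linarith
          | inr h => exact absurd h hs
        · linarith [hsmem.1]
      rw [Kf]
      rw [(hgderiv _ hmem).deriv]
  rw [← hval]
  exact hmain
end
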